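/- Suppose an interconnection (V, B_d, B_r) has the structural synchronization property, i.e. there exist Laplacians D ∈ lap(V, B_d) and R ∈ lap(V, B_r) with Re λ₂(D + iR) > 0. Then the graph (V, B_d ∪ B_r) is connected and B_d is nonempty. -/

import Mathlib

open Matrix Polynomial

/-- `G` is the incidence matrix of a graph: every column is `e_k - e_ℓ`
for some pair of distinct vertices `k, ℓ`. -/
def IsIncidence {q p : ℕ} (G : Matrix (Fin q) (Fin p) ℝ) : Prop :=
  ∀ j : Fin p, ∃ k ℓ : Fin q, k ≠ ℓ ∧
    ∀ i : Fin q, G i j = (if i = k then 1 else 0) - (if i = ℓ then 1 else 0)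

/-- The complex matrix `D + iR` built from two real matrices. -/
noncomputable def cM {q : ℕ} (D R : Matrix (Fin q) (Fin q) ℝ) :
    Matrix (Fin q) (Fin q) ℂ :=
  D.map (fun a => (a : ℂ)) + Complex.I • (R.map (fun a => (a : ℂ)))

/-- `Re λ₂(M) > 0`: at most one eigenvalue (with multiplicity), ordered by real
part, has nonpositive real part. -/
noncomputable def reLam2Pos {q : ℕ} (M : Matrix (Fin q) (Fin q) ℂ) : Prop :=
  (M.charpoly.roots.filter (fun μ : ℂ => μ.re ≤ 0)).card ≤ 1

/-- `Re λ₂(M) ≤ 0`: at least two eigenvalues (with multiplicity), ordered by real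
part, have nonpositive real part. -/
noncomputable def reLam2Nonpos {q : ℕ} (M : Matrix (Fin q) (Fin q) ℂ) : Prop :=
  2 ≤ (M.charpoly.roots.filter (fun μ : ℂ => μ.re ≤ 0)).card

/-- The weighted Laplacian `G Λ Gᵀ`. -/
def lapOf {q p : ℕ} (G : Matrix (Fin q) (Fin p) ℝ) (w : Fin p → ℝ) :
    Matrix (Fin q) (Fin q) ℝ :=
  G * diagonal w * Gᵀ

section Aux

variable {q : ℕ}

lemma eval_charpoly_eq_det' (M : Matrix (Fin q) (Fin q) ℂ) (μ : ℂ) :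
    M.charpoly.eval μ = (μ • (1 : Matrix (Fin q) (Fin q) ℂ) - M).det := by
  have hmap : (M.charmatrix).map (Polynomial.evalRingHom μ) =
      μ • (1 : Matrix (Fin q) (Fin q) ℂ) - M := by
    ext i j
    by_cases h : i = j
    · subst h
      simp [Matrix.charmatrix_apply_eq, Matrix.one_apply]
    · simp [Matrix.charmatrix_apply_ne _ _ _ h, Matrix.one_apply_ne h]
  calc M.charpoly.eval μ = (Polynomial.evalRingHom μ) (M.charmatrix.det) := rfl
    _ = ((M.charmatrix).map (Polynomial.evalRingHom μ)).det := by
        rw [RingHom.map_det]; rfl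
    _ = _ := by rw [hmap]

lemma root_has_eigenvector' (M : Matrix (Fin q) (Fin q) ℂ) {μ : ℂ}
    (h : μ ∈ M.charpoly.roots) : ∃ v, v ≠ 0 ∧ M *ᵥ v = μ • v := by
  have hne : M.charpoly ≠ 0 := M.charpoly_monic.ne_zero
  have hroot : M.charpoly.eval μ = 0 := (Polynomial.mem_roots hne).1 h
  rw [eval_charpoly_eq_det'] at hroot
  obtain ⟨v, hv0, hv⟩ := (Matrix.exists_mulVec_eq_zero_iff).2 hroot
  refine ⟨v, hv0, ?_⟩
  rw [Matrix.sub_mulVec, Matrix.smul_mulVec, Matrix.one_mulVec, sub_eq_zero] at hv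
  exact hv.symm

lemma charpoly_toLin'' (M : Matrix (Fin q) (Fin q) ℂ) :
    (Matrix.toLin' M).charpoly = M.charpoly := by
  rw [← LinearMap.charpoly_toMatrix (Matrix.toLin' M) (Pi.basisFun ℂ (Fin q)),
    LinearMap.toMatrix_eq_toMatrix', LinearMap.toMatrix'_toLin']

lemma two_le_count_zero_roots' (M : Matrix (Fin q) (Fin q) ℂ) (u v : Fin q → ℂ)
    (hu : M *ᵥ u = 0) (hv : M *ᵥ v = 0) (hind : LinearIndependent ℂ ![u, v]) :
    2 ≤ M.charpoly.roots.count 0 := by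
  classical
  rw [Polynomial.count_roots, Polynomial.rootMultiplicity_eq_natTrailingDegree',
    ← charpoly_toLin'' M, ← LinearMap.finrank_maxGenEigenspace_zero_eq]
  have hle : Submodule.span ℂ (Set.range ![u, v]) ≤
      (Module.End.maxGenEigenspace (Matrix.toLin' M) 0) := by
    rw [Submodule.span_le]
    rintro x ⟨i, rfl⟩
    rw [SetLike.mem_coe, Module.End.mem_maxGenEigenspace]
    refine ⟨1, ?_⟩
    fin_cases i <;> simp [Matrix.toLin'_apply, hu, hv]
  calc 2 = Module.finrank ℂ (Submodule.span ℂ (Set.range ![u, v])) := by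
        rw [finrank_span_eq_card hind]; simp
    _ ≤ _ := Submodule.finrank_mono hle

lemma incidence_ones' {p : ℕ} (G : Matrix (Fin q) (Fin p) ℝ) (hG : IsIncidence G) :
    Gᵀ *ᵥ (fun _ => (1 : ℝ)) = 0 := by
  funext j
  obtain ⟨k, l, hkl, hcol⟩ := hG j
  simp [Matrix.mulVec, dotProduct, hcol, Finset.sum_sub_distrib]

lemma lap_mulVec_zero' {p : ℕ} (G : Matrix (Fin q) (Fin p) ℝ) (w : Fin p → ℝ)
    (x : Fin q → ℝ) (h : Gᵀ *ᵥ x = 0) : (lapOf G w) *ᵥ x = 0 := by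
  rw [lapOf, ← Matrix.mulVec_mulVec, h, Matrix.mulVec_zero]

lemma map_mulVec_zero' (A : Matrix (Fin q) (Fin q) ℝ) (x : Fin q → ℝ)
    (h : A *ᵥ x = 0) :
    (A.map (fun a => (a : ℂ))) *ᵥ (fun i => (x i : ℂ)) = 0 := by
  funext i
  have := (RingHom.map_mulVec (algebraMap ℝ ℂ) A x i).symm
  simpa [Function.comp_def, h] using this

lemma lapOf_symm' {p : ℕ} (G : Matrix (Fin q) (Fin p) ℝ) (w : Fin p → ℝ) :
    (lapOf G w)ᵀ = lapOf G w := by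
  rw [lapOf, Matrix.transpose_mul, Matrix.transpose_mul, Matrix.transpose_transpose,
    Matrix.diagonal_transpose, Matrix.mul_assoc]

end Aux

/-- If an interconnection has the structural synchronization property, then the
union graph is connected and the dissipative edge set is nonempty. -/
theorem stmt13 {q pd pr : ℕ} (hq : 2 ≤ q)
    (Gd : Matrix (Fin q) (Fin pd) ℝ) (Gr : Matrix (Fin q) (Fin pr) ℝ)
    (hGd : IsIncidence Gd) (hGr : IsIncidence Gr)
    (hSS : ∃ (wd : Fin pd → ℝ) (wr : Fin pr → ℝ),
      (∀ i, 0 < wd i) ∧ (∀ i, 0 < wr i) ∧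
      reLam2Pos (cM (lapOf Gd wd) (lapOf Gr wr))) :
    (∀ v : Fin q → ℝ, Gdᵀ.mulVec v = 0 → Grᵀ.mulVec v = 0 →
        ∃ c : ℝ, v = fun _ => c) ∧ 0 < pd := by
  classical
  obtain ⟨wd, wr, hwd, hwr, hlam⟩ := hSS
  set D : Matrix (Fin q) (Fin q) ℝ := lapOf Gd wd with hDdef
  set R : Matrix (Fin q) (Fin q) ℝ := lapOf Gr wr with hRdef
  set M : Matrix (Fin q) (Fin q) ℂ := cM D R with hMdef
  have hlam' : (M.charpoly.roots.filter (fun μ : ℂ => μ.re ≤ 0)).card ≤ 1 := hlam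
  constructor
  · -- connectivity
    intro v hd hr
    by_contra hcon
    push_neg at hcon
    have hj0 : (0 : ℕ) < q := by omega
    set j0 : Fin q := ⟨0, hj0⟩ with hj0def
    have hvne : ∃ i, v i ≠ v j0 := by
      by_contra hc
      push_neg at hc
      exact hcon (v j0) (funext fun i => hc i)
    obtain ⟨i0, hi0⟩ := hvne
    set u : Fin q → ℂ := fun _ => 1 with hudef
    set z : Fin q → ℂ := fun i => (v i : ℂ) with hzdef
    -- M kills the all-ones vector
    have honesd : Gdᵀ *ᵥ (fun _ => (1 : ℝ)) = 0 := incidence_ones' Gd hGd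
    have honesr : Grᵀ *ᵥ (fun _ => (1 : ℝ)) = 0 := incidence_ones' Gr hGr
    have hDu : D *ᵥ (fun _ => (1 : ℝ)) = 0 := lap_mulVec_zero' Gd wd _ honesd
    have hRu : R *ᵥ (fun _ => (1 : ℝ)) = 0 := lap_mulVec_zero' Gr wr _ honesr
    have hMu : M *ᵥ u = 0 := by
      have h1 := map_mulVec_zero' D _ hDu
      have h2 := map_mulVec_zero' R _ hRu
      have hu1 : u = fun i => (((1 : ℝ) : ℂ)) := by
        funext i; simp [hudef]
      rw [hMdef, cM, Matrix.add_mulVec, Matrix.smul_mulVec, hu1, h1, h2,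
        smul_zero, add_zero]
    have hMz : M *ᵥ z = 0 := by
      have hDv : D *ᵥ v = 0 := lap_mulVec_zero' Gd wd _ hd
      have hRv : R *ᵥ v = 0 := lap_mulVec_zero' Gr wr _ hr
      have h1 := map_mulVec_zero' D _ hDv
      have h2 := map_mulVec_zero' R _ hRv
      rw [hMdef, cM, Matrix.add_mulVec, Matrix.smul_mulVec, hzdef, h1, h2,
        smul_zero, add_zero]
    have hind : LinearIndependent ℂ ![u, z] := by
      rw [LinearIndependent.pair_iff]
      intro s t hst
      have h0 := congrFun hst j0
      have hi := congrFun hst i0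
      simp only [Pi.add_apply, Pi.smul_apply, hudef, hzdef, smul_eq_mul, mul_one,
        Pi.zero_apply] at h0 hi
      have hvv : (v i0 : ℂ) ≠ (v j0 : ℂ) := by exact_mod_cast hi0
      have ht : t * ((v i0 : ℂ) - (v j0 : ℂ)) = 0 := by ring_nf; linear_combination hi - h0
      have ht0 : t = 0 := by
        rcases mul_eq_zero.1 ht with h | h
        · exact h
        · exact absurd (sub_eq_zero.1 h) hvv
      refine ⟨?_, ht0⟩
      rw [ht0, zero_mul, add_zero] at h0
      exact h0
    have h2 := two_le_count_zero_roots' M u z hMu hMz hind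
    have h3 : M.charpoly.roots.count 0 ≤
        (M.charpoly.roots.filter (fun μ : ℂ => μ.re ≤ 0)).card := by
      rw [Multiset.count_eq_card_filter_eq]
      refine Multiset.card_le_card (Multiset.monotone_filter_right _ ?_)
      intro μ hμ
      simp [← hμ]
    omega
  · -- pd > 0
    by_contra hpd
    push_neg at hpd
    haveI : IsEmpty (Fin pd) := ⟨fun i => absurd i.2 (by omega)⟩
    have hD0 : D = 0 := by
      ext i j
      simp [hDdef, lapOf, Matrix.mul_apply]
    set R' : Matrix (Fin q) (Fin q) ℂ := R.map (fun a => (a : ℂ)) with hR'def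
    have hM : M = Complex.I • R' := by
      rw [hMdef, cM, hD0]
      have : (0 : Matrix (Fin q) (Fin q) ℝ).map (fun a => (a : ℂ)) = 0 := by
        ext i j; simp
      rw [this, zero_add, hR'def]
    have hsym : Rᵀ = R := lapOf_symm' Gr wr
    have hherm : R'ᴴ = R' := by
      ext i j
      have hji : R j i = R i j := by
        have := congrFun (congrFun hsym i) j
        simpa [Matrix.transpose_apply] using this
      simp [hR'def, Matrix.conjTranspose_apply, Matrix.map_apply, Complex.conj_ofReal, hji]
    have key : ∀ μ ∈ M.charpoly.roots, μ.re = 0 := by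
      intro μ hμ
      obtain ⟨x, hx0, hx⟩ := root_has_eigenvector' M hμ
      rw [hM, Matrix.smul_mulVec] at hx
      have hRx : R' *ᵥ x = ((-Complex.I) * μ) • x := by
        calc R' *ᵥ x = ((-Complex.I) * Complex.I) • (R' *ᵥ x) := by
              simp [Complex.I_mul_I]
          _ = (-Complex.I) • (Complex.I • (R' *ᵥ x)) := by rw [← smul_smul]
          _ = (-Complex.I) • (μ • x) := by rw [hx]
          _ = ((-Complex.I) * μ) • x := by rw [smul_smul]
      have hs : star (star x ⬝ᵥ (R' *ᵥ x)) = star x ⬝ᵥ (R' *ᵥ x) := by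
        rw [← Matrix.star_dotProduct, Matrix.star_mulVec, hherm, ← Matrix.dotProduct_mulVec]
      have htne : star x ⬝ᵥ x ≠ 0 := by
        open ComplexOrder in
        exact fun hc => hx0 (dotProduct_star_self_eq_zero.mp hc)
      have hstart : star (star x ⬝ᵥ x) = star x ⬝ᵥ x := by
        rw [← Matrix.star_dotProduct]
      rw [hRx] at hs
      have hsmul : star x ⬝ᵥ (((-Complex.I) * μ) • x) = ((-Complex.I) * μ) * (star x ⬝ᵥ x) := by
        simp [dotProduct_smul, smul_eq_mul]
      rw [hsmul, star_mul', hstart] at hs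
      have hfac : (star ((-Complex.I) * μ) - ((-Complex.I) * μ)) * (star x ⬝ᵥ x) = 0 := by
        rw [sub_mul, hs, mul_comm, sub_self]
      have hstareq : star ((-Complex.I) * μ) = ((-Complex.I) * μ) := by
        rcases mul_eq_zero.1 hfac with h | h
        · exact sub_eq_zero.1 h
        · exact absurd h htne
      have him : ((-Complex.I) * μ).im = 0 := Complex.conj_eq_iff_im.mp hstareq
      simpa [Complex.mul_im] using him
    have hcard : (M.charpoly.roots.filter (fun μ : ℂ => μ.re ≤ 0)).card = q := by
      rw [Multiset.filter_eq_self.2 (fun μ hμ => le_of_eq (key μ hμ))]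
      rw [(Polynomial.splits_iff_card_roots).1 (IsAlgClosed.splits _),
        Matrix.charpoly_natDegree_eq_dim]
      simp
    omega
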